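/- A convex solid set A ⊆ L⁰₊ is tight (bounded in probability) if and only if it is radially bounded. -/

import Mathlib

open MeasureTheory Filter

variable {Ω : Type*} [MeasurableSpace Ω]

/-- `A ⊆ L⁰₊` is solid: `X ∈ A` and `0 ≤ Y ≤ X` (a.e.) imply `Y ∈ A`. -/
def Solid (P : Measure Ω) (A : Set (Ω → ℝ)) : Prop :=
  ∀ X ∈ A, ∀ Y : Ω → ℝ, (∀ᵐ ω ∂P, 0 ≤ Y ω ∧ Y ω ≤ X ω) → Y ∈ A

/-- Radial boundedness for a set of positive random variables: every ray through a
nonzero element eventually leaves the set. -/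
def RadiallyBoundedPos (P : Measure Ω) (A : Set (Ω → ℝ)) : Prop :=
  ∀ X ∈ A, P {ω | 0 < X ω} ≠ 0 →
    ∃ Λ > (0 : ℝ), ∀ l : ℝ, Λ < l → (fun ω => l * X ω) ∉ A

/-- Tightness (boundedness in probability) for a set of positive random variables. -/
def TightPos (P : Measure Ω) (A : Set (Ω → ℝ)) : Prop :=
  ∀ ε > (0 : ℝ), ∃ M > (0 : ℝ), ∀ X ∈ A, P {ω | M < X ω} < ENNReal.ofReal ε

/-- Radial boundedness for a general set of random variables. -/
def RadiallyBounded (P : Measure Ω) (A : Set (Ω → ℝ)) : Prop :=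
  ∀ X ∈ A, P {ω | X ω ≠ 0} ≠ 0 →
    ∃ Λ > (0 : ℝ), ∀ l : ℝ, Λ < l → (fun ω => l * X ω) ∉ A

/-- Tightness (boundedness in probability) for a general set of random variables. -/
def Tight (P : Measure Ω) (A : Set (Ω → ℝ)) : Prop :=
  ∀ ε > (0 : ℝ), ∃ M > (0 : ℝ), ∀ X ∈ A, P {ω | M < |X ω|} < ENNReal.ofReal ε

/-- Membership in the closure of `A` for the (metrizable) topology of convergence
in probability. -/
def InClosure (P : Measure Ω) (A : Set (Ω → ℝ)) (X : Ω → ℝ) : Prop :=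
  ∃ Y : ℕ → Ω → ℝ, (∀ n, Y n ∈ A) ∧ TendstoInMeasure P Y atTop X

/-- A convex solid set `A ⊆ L⁰₊` is tight iff it is radially bounded. -/
theorem stmt2 (P : Measure Ω) [IsProbabilityMeasure P] (A : Set (Ω → ℝ))
    (hL0 : ∀ X ∈ A, AEMeasurable X P) (hpos : ∀ X ∈ A, ∀ᵐ ω ∂P, 0 ≤ X ω)
    (hconv : Convex ℝ A) (hsolid : Solid P A) :
    TightPos P A ↔ RadiallyBoundedPos P A := by
  constructor
  · -- Tight → Radially bounded
    intro ht X hX hX0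
    have hsub : {ω | 0 < X ω} ⊆ ⋃ n : ℕ, {ω | 1 / ((n : ℝ) + 1) < X ω} := by
      intro ω hω
      have hω' : 0 < X ω := hω
      obtain ⟨n, hn⟩ := exists_nat_one_div_lt hω'
      exact Set.mem_iUnion.2 ⟨n, hn⟩
    have hexn : ∃ n : ℕ, P {ω | 1 / ((n : ℝ) + 1) < X ω} ≠ 0 := by
      by_contra hc
      push_neg at hc
      exact hX0 (measure_mono_null hsub (measure_iUnion_null hc))
    obtain ⟨n, hn⟩ := hexn
    set δ := P {ω | 1 / ((n : ℝ) + 1) < X ω} with hδ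
    have hδtop : δ ≠ ⊤ := measure_ne_top P _
    have hδpos : 0 < δ.toReal := ENNReal.toReal_pos hn hδtop
    obtain ⟨M, hM, hMall⟩ := ht δ.toReal hδpos
    refine ⟨M * ((n : ℝ) + 1), by positivity, fun l hl hmem => ?_⟩
    have hlt := hMall _ hmem
    rw [ENNReal.ofReal_toReal hδtop] at hlt
    have hsubs : {ω | 1 / ((n : ℝ) + 1) < X ω} ⊆ {ω | M < l * X ω} := by
      intro ω hω
      simp only [Set.mem_setOf_eq] at hω ⊢
      have hn1 : (0 : ℝ) < (n : ℝ) + 1 := by positivity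
      have hl0 : 0 < l := lt_trans (by positivity) hl
      rw [div_lt_iff₀ hn1] at hω
      nlinarith
    exact absurd hlt (not_lt.2 (measure_mono hsubs))
  · -- Radially bounded → Tight
    intro hrb
    by_contra hnt
    unfold TightPos at hnt
    push_neg at hnt
    obtain ⟨ε, hε, hne⟩ := hnt
    set ε' := ENNReal.ofReal ε with hε'def
    have hε'0 : 0 < ε' := ENNReal.ofReal_pos.2 hε
    have hε'top : ε' ≠ ⊤ := ENNReal.ofReal_ne_top
    have hch : ∀ m : ℕ, ∃ X ∈ A, ε' ≤ P {ω | (4 : ℝ) ^ m < X ω} := by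
      intro m
      obtain ⟨X, hXA, hXP⟩ := hne ((4 : ℝ) ^ m) (by positivity)
      exact ⟨X, hXA, hXP⟩
    choose X hXA hXP using hch
    set Y : ℕ → Ω → ℝ := fun m => (hL0 (X m) (hXA m)).mk (X m) with hYdef
    have hYmeas : ∀ m, Measurable (Y m) := fun m => (hL0 (X m) (hXA m)).measurable_mk
    have hYeq : ∀ m, X m =ᵐ[P] Y m := fun m => (hL0 (X m) (hXA m)).ae_eq_mk
    have hYA : ∀ m, Y m ∈ A := by
      intro m
      refine hsolid (X m) (hXA m) (Y m) ?_
      filter_upwards [hYeq m, hpos (X m) (hXA m)] with ω h1 h2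
      exact ⟨h1 ▸ h2, h1.ge⟩
    have hYpos : ∀ m, ∀ᵐ ω ∂P, 0 ≤ Y m ω := fun m => hpos (Y m) (hYA m)
    have hYP : ∀ m, ε' ≤ P {ω | (4 : ℝ) ^ m < Y m ω} := by
      intro m
      refine le_trans (hXP m) (le_of_eq (measure_congr ?_))
      filter_upwards [hYeq m] with ω hω
      exact congrArg (fun t : ℝ => (4 : ℝ) ^ m < t) hω
    set As : ℕ → Set Ω := fun m => {ω | (4 : ℝ) ^ m < Y m ω} with hAsdef
    have hAmeas : ∀ m, MeasurableSet (As m) :=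
      fun m => measurableSet_lt measurable_const (hYmeas m)
    set U : ℕ → Set Ω := fun N => ⋃ k, As (N + k) with hUdef
    have hUmeas : ∀ N, MeasurableSet (U N) := fun N => MeasurableSet.iUnion fun k => hAmeas _
    have hUε : ∀ N, ε' ≤ P (U N) := by
      intro N
      refine le_trans (hYP N) (measure_mono ?_)
      intro ω h
      exact Set.mem_iUnion.2 ⟨0, h⟩
    set C : ℕ → ℕ → Set Ω := fun N K => ⋃ k ∈ Finset.range K, As (N + k) with hCdef
    have hCmeas : ∀ N K, MeasurableSet (C N K) :=
      fun N K => (Finset.range K).measurableSet_biUnion fun k _ => hAmeas _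
    have hCmono : ∀ N, Monotone (C N) := by
      intro N K1 K2 hK
      exact Set.iUnion₂_mono' fun k hk =>
        ⟨k, Finset.mem_range.2 (lt_of_lt_of_le (Finset.mem_range.1 hk) hK), subset_rfl⟩
    have hCU : ∀ N, (⋃ K, C N K) = U N := by
      intro N
      ext ω
      simp only [hCdef, hUdef, Set.mem_iUnion]
      constructor
      · rintro ⟨K, k, hk, h⟩
        exact ⟨k, h⟩
      · rintro ⟨k, h⟩
        exact ⟨k + 1, k, Finset.mem_range.2 (Nat.lt_succ_self k), h⟩
    have hKex : ∀ N : ℕ, ∃ K, 1 ≤ K ∧ P (U N \ C N K) ≤ ε' * 2⁻¹ ^ (N + 2) := by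
      intro N
      have hanti : Antitone (fun K => U N \ C N K) :=
        fun K1 K2 h => Set.diff_subset_diff_right (hCmono N h)
      have hint : (⋂ K, U N \ C N K) = ∅ := by
        rw [← Set.diff_iUnion, hCU, Set.diff_self]
      have htend := tendsto_measure_iInter_atTop (μ := P)
        (fun K => ((hUmeas N).diff (hCmeas N K)).nullMeasurableSet) hanti
        ⟨0, measure_ne_top _ _⟩
      rw [hint, measure_empty] at htend
      have hpos' : (0 : ENNReal) < ε' * 2⁻¹ ^ (N + 2) :=
        ENNReal.mul_pos hε'0.ne' (pow_ne_zero _ (ENNReal.inv_ne_zero.2 (by norm_num)))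
      obtain ⟨K, hK1, hK2⟩ := ((htend.eventually_lt_const hpos').and (eventually_ge_atTop 1)).exists
      exact ⟨K, hK2, hK1.le⟩
    choose K hK1 hK2 using hKex
    have hUanti : Antitone U := by
      intro N1 N2 h ω hω
      obtain ⟨k, hk⟩ := Set.mem_iUnion.1 hω
      exact Set.mem_iUnion.2 ⟨N2 - N1 + k, by rwa [show N1 + (N2 - N1 + k) = N2 + k by omega]⟩
    have hBε : ε' ≤ P (⋂ N, U N) := by
      rw [hUanti.measure_iInter (fun N => (hUmeas N).nullMeasurableSet) ⟨0, measure_ne_top _ _⟩]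
      exact le_iInf fun N => hUε N
    set E : Set Ω := ⋃ N, U N \ C N (K N) with hEdef
    have hEle : P E ≤ ε' * 2⁻¹ := by
      calc P E ≤ ∑' N, P (U N \ C N (K N)) := measure_iUnion_le _
        _ ≤ ∑' N : ℕ, ε' * 2⁻¹ ^ (N + 2) := ENNReal.tsum_le_tsum fun N => hK2 N
        _ = ε' * 2⁻¹ := by
            rw [ENNReal.tsum_mul_left]
            congr 1
            have h1 : ∀ N : ℕ, (2⁻¹ : ENNReal) ^ (N + 2) = 2⁻¹ ^ 2 * 2⁻¹ ^ N := by
              intro N; rw [pow_add, mul_comm]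
            rw [tsum_congr h1, ENNReal.tsum_mul_left, ENNReal.tsum_geometric,
              ENNReal.one_sub_inv_two, inv_inv]
            rw [pow_two]
            rw [mul_assoc]
            rw [ENNReal.inv_mul_cancel (by norm_num) (by norm_num), mul_one]
    set D : Set Ω := (⋂ N, U N) \ E with hDdef
    have hDC : ∀ N, D ⊆ C N (K N) := by
      intro N ω hω
      have h1 : ω ∈ U N := Set.mem_iInter.1 hω.1 N
      by_contra hc
      exact hω.2 (Set.mem_iUnion.2 ⟨N, h1, hc⟩)
    have hBsub : (⋂ N, U N) ⊆ D ∪ E := fun ω hω =>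
      (em (ω ∈ E)).elim Or.inr fun h => Or.inl ⟨hω, h⟩
    have hDpos : ε' * 2⁻¹ ≤ P D := by
      have h1 : ε' ≤ P D + ε' * 2⁻¹ :=
        le_trans hBε (le_trans (measure_mono hBsub)
          (le_trans (measure_union_le _ _) (add_le_add le_rfl hEle)))
      have hhalf : (2⁻¹ + 2⁻¹ : ENNReal) = 1 := by
        rw [← two_mul]; exact ENNReal.mul_inv_cancel two_ne_zero (by norm_num)
      have h2 : ε' * 2⁻¹ + ε' * 2⁻¹ = ε' := by rw [← mul_add, hhalf, mul_one]
      have h3 : ε' * 2⁻¹ + ε' * 2⁻¹ ≤ P D + ε' * 2⁻¹ := by rw [h2]; exact h1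
      exact (ENNReal.add_le_add_iff_right (by finiteness)).mp h3
    have hD0 : P D ≠ 0 := by
      intro h
      rw [h, le_zero_iff] at hDpos
      exact (ENNReal.mul_pos hε'0.ne' (ENNReal.inv_ne_zero.2 (by norm_num))).ne' hDpos
    -- Key: for all N and 0 ≤ l ≤ 4^N/2, l · 1_D ∈ A
    have hkey : ∀ N : ℕ, ∀ l : ℝ, 0 ≤ l → l ≤ (4 : ℝ) ^ N / 2 →
        (fun ω => l * D.indicator (fun _ => (1 : ℝ)) ω) ∈ A := by
      intro N l hl0 hlN
      have hKn : 1 ≤ K N := hK1 N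
      set s : ℝ := ∑ k ∈ Finset.range (K N), ((2 : ℝ)⁻¹) ^ k with hs
      have hs1 : (1 : ℝ) ≤ s := by
        rw [hs]
        have h0 : 0 ∈ Finset.range (K N) := Finset.mem_range.2 hKn
        have h := Finset.single_le_sum (f := fun k => ((2 : ℝ)⁻¹) ^ k)
          (fun k _ => by positivity) h0
        simpa using h
      have hs2 : s ≤ 2 := by
        rw [hs, geom_sum_eq (by norm_num : ((2 : ℝ)⁻¹) ≠ 1)]
        have h4 : (0 : ℝ) ≤ ((2 : ℝ)⁻¹) ^ (K N) := by positivity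
        have he : (((2 : ℝ)⁻¹) ^ (K N) - 1) / ((2 : ℝ)⁻¹ - 1)
            = 2 - 2 * ((2 : ℝ)⁻¹) ^ (K N) := by
          field_simp
          ring
        rw [he]
        linarith
      have hspos : (0 : ℝ) < s := lt_of_lt_of_le one_pos hs1
      set c : ℕ → ℝ := fun k => ((2 : ℝ)⁻¹) ^ k / s with hc
      have hcnn : ∀ k ∈ Finset.range (K N), (0 : ℝ) ≤ c k := by
        intro k _
        exact div_nonneg (by positivity) hspos.le
      have hcsum : ∑ k ∈ Finset.range (K N), c k = 1 := by
        simp only [hc]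
        rw [← Finset.sum_div, ← hs, div_self hspos.ne']
      have hmem : (∑ k ∈ Finset.range (K N), c k • Y (N + k)) ∈ A :=
        hconv.sum_mem hcnn hcsum fun k _ => hYA (N + k)
      set h : Ω → ℝ := ∑ k ∈ Finset.range (K N), c k • Y (N + k) with hh
      have hhω : ∀ ω, h ω = ∑ k ∈ Finset.range (K N), c k * Y (N + k) ω := by
        intro ω
        rw [hh, Finset.sum_apply]
        simp [smul_eq_mul]
      refine hsolid h hmem _ ?_
      have hall : ∀ᵐ ω ∂P, ∀ m, 0 ≤ Y m ω := ae_all_iff.2 hYpos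
      filter_upwards [hall] with ω hω
      refine ⟨mul_nonneg hl0 (Set.indicator_nonneg (fun _ _ => zero_le_one) ω), ?_⟩
      by_cases hωD : ω ∈ D
      · rw [Set.indicator_of_mem hωD, mul_one]
        have hωC : ω ∈ C N (K N) := hDC N hωD
        rw [hCdef] at hωC
        simp only [Set.mem_iUnion] at hωC
        obtain ⟨k, hkK, hkA⟩ := hωC
        have hkA' : (4 : ℝ) ^ (N + k) < Y (N + k) ω := hkA
        have h1 : c k * (4 : ℝ) ^ (N + k) ≤ c k * Y (N + k) ω :=
          mul_le_mul_of_nonneg_left hkA'.le (hcnn k hkK)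
        have h2 : c k * Y (N + k) ω ≤ h ω := by
          rw [hhω]
          exact Finset.single_le_sum
            (fun j hj => mul_nonneg (hcnn j hj) (hω _)) hkK
        have e1 : ((2 : ℝ)⁻¹) ^ k * (4 : ℝ) ^ k = 2 ^ k := by
          rw [← mul_pow]; norm_num
        have e2 : (1 : ℝ) ≤ 2 ^ k := one_le_pow₀ (by norm_num)
        have h3 : (4 : ℝ) ^ N / 2 ≤ c k * (4 : ℝ) ^ (N + k) := by
          rw [hc, div_mul_eq_mul_div, le_div_iff₀ hspos, pow_add]
          have hp4 : (0 : ℝ) < (4 : ℝ) ^ N := by positivity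
          nlinarith
        linarith
      · rw [Set.indicator_of_notMem hωD, mul_zero, hhω]
        exact Finset.sum_nonneg fun j hj => mul_nonneg (hcnn j hj) (hω _)
    set g : Ω → ℝ := D.indicator fun _ => (1 : ℝ) with hg
    have hgA : g ∈ A := by
      have := hkey 1 1 zero_le_one (by norm_num)
      simpa [one_mul] using this
    have hgpos : P {ω | 0 < g ω} ≠ 0 := by
      have hset : {ω | 0 < g ω} = D := by
        ext ω
        by_cases hω : ω ∈ D
        · simp [hg, Set.indicator_of_mem hω, hω]
        · simp [hg, Set.indicator_of_notMem hω, hω]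
      rw [hset]
      exact hD0
    obtain ⟨Λ, hΛ0, hΛ⟩ := hrb g hgA hgpos
    obtain ⟨N, hN⟩ := pow_unbounded_of_one_lt (2 * (Λ + 1)) (show (1 : ℝ) < 4 by norm_num)
    have hmem := hkey N (Λ + 1) (by linarith) (by rw [le_div_iff₀ (by norm_num : (0:ℝ) < 2)]; linarith)
    exact hΛ (Λ + 1) (lt_add_one Λ) hmem
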